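/- arXiv:2110.07269 — 3 statements merged into one kernel-verified Lean document; each statement's English description precedes it below -/
import Mathlib

section
/- Let J be an n×n real matrix, T, η, ℓ > 0 with η ≤ 1/2, satisfying: (i) J + Jᵀ ⪰ 0 (monotonicity), (ii) Jᵀ J ⪯ ℓ² Iₙ (Lipschitz bound), and (iii) T² < (1 - η)/(2ℓ). Then Iₙ - (T²/(ℓ(1-η))) (ℓ Iₙ - Jᵀ)(ℓ Iₙ - J) is positive definite. (This is Lemma 2: reset condition (RC₂) implies ℓ-global contractivity of S₀.) -/
open Matrix

/-- Lemma 2 of the paper: under monotonicity (`J + Jᵀ ⪰ 0`), the Lipschitz bound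
(`JᵀJ ⪯ ℓ²I`), and the reset condition (RC₂) `T² < (1-η)/(2ℓ)`, the scaled matrix `S₀`
is `ℓ`-globally contractive, i.e.
`Iₙ - (T²/(ℓ(1-η))) (ℓIₙ - Jᵀ)(ℓIₙ - J) ≻ 0`. -/
theorem RC2_implies_contractivity {n : ℕ}
    (J : Matrix (Fin n) (Fin n) ℝ) (T η ℓ : ℝ)
    (hT : 0 < T) (hη : 0 < η) (hη2 : η ≤ 1 / 2) (hℓ : 0 < ℓ)
    (hmono : (J + Jᵀ).PosSemidef)
    (hlip : ((ℓ ^ 2 • (1 : Matrix (Fin n) (Fin n) ℝ)) - Jᵀ * J).PosSemidef)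
    (hRC2 : T ^ 2 < (1 - η) / (2 * ℓ)) :
    ((1 : Matrix (Fin n) (Fin n) ℝ) -
      (T ^ 2 / (ℓ * (1 - η))) •
        ((ℓ • (1 : Matrix (Fin n) (Fin n) ℝ) - Jᵀ) *
          (ℓ • (1 : Matrix (Fin n) (Fin n) ℝ) - J))).PosDef := by
  have h1η : 0 < 1 - η := by linarith
  set c := T ^ 2 / (ℓ * (1 - η)) with hc
  have hcpos : 0 < c := div_pos (pow_pos hT 2) (mul_pos hℓ h1η)
  have hc2 : c * (2 * ℓ ^ 2) < 1 := by
    rw [hc, div_mul_eq_mul_div, div_lt_one (mul_pos hℓ h1η)]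
    have h' : T ^ 2 * (2 * ℓ) < 1 - η := (lt_div_iff₀ (by positivity)).mp hRC2
    nlinarith [mul_lt_mul_of_pos_right h' hℓ]
  set A : Matrix (Fin n) (Fin n) ℝ := ℓ • (1 : Matrix (Fin n) (Fin n) ℝ) - J with hA
  have hAT : ℓ • (1 : Matrix (Fin n) (Fin n) ℝ) - Jᵀ = Aᵀ := by
    simp [hA, transpose_sub, transpose_smul, transpose_one]
  rw [hAT]
  have hAA : Aᵀ * A = ℓ ^ 2 • (1 : Matrix (Fin n) (Fin n) ℝ) - ℓ • (J + Jᵀ) + Jᵀ * J := by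
    rw [pow_two]
    simp only [hA, transpose_sub, transpose_smul, transpose_one, sub_mul, mul_sub,
      Matrix.smul_mul, Matrix.mul_smul, Matrix.one_mul, Matrix.mul_one, smul_smul,
      smul_add]
    abel
  refine posDef_iff_dotProduct_mulVec.mpr ⟨?_, ?_⟩
  · show _ = _
    simp [conjTranspose_eq_transpose_of_trivial, transpose_sub, transpose_smul,
      transpose_mul, transpose_transpose, transpose_one]
  · intro x hx
    have hs : 0 < x ⬝ᵥ x := by
      simpa using dotProduct_star_self_pos_iff.mpr hx
    have hq0 : 0 ≤ x ⬝ᵥ ((Aᵀ * A) *ᵥ x) := by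
      simpa [conjTranspose_eq_transpose_of_trivial] using
        (posSemidef_iff_dotProduct_mulVec.mp (posSemidef_conjTranspose_mul_self A)).2 x
    have hmono' : 0 ≤ x ⬝ᵥ (J *ᵥ x) + x ⬝ᵥ (Jᵀ *ᵥ x) := by
      simpa [add_mulVec, dotProduct_add] using (posSemidef_iff_dotProduct_mulVec.mp hmono).2 x
    have hlip' : x ⬝ᵥ ((Jᵀ * J) *ᵥ x) ≤ ℓ ^ 2 * (x ⬝ᵥ x) := by
      have := (posSemidef_iff_dotProduct_mulVec.mp hlip).2 x
      simp only [star_trivial, sub_mulVec, smul_mulVec, one_mulVec, dotProduct_sub,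
        dotProduct_smul, smul_eq_mul] at this
      linarith
    have hqle : x ⬝ᵥ ((Aᵀ * A) *ᵥ x) ≤ 2 * ℓ ^ 2 * (x ⬝ᵥ x) := by
      rw [hAA]
      simp only [add_mulVec, sub_mulVec, smul_mulVec, one_mulVec, dotProduct_add,
        dotProduct_sub, dotProduct_smul, smul_eq_mul]
      nlinarith
    simp only [star_trivial, sub_mulVec, smul_mulVec, one_mulVec, dotProduct_sub,
      dotProduct_smul, smul_eq_mul]
    nlinarith
end

section
/- Let J be an n×n real matrix and κ, ℓ, T, η, δ real parameters with 0 < κ ≤ ℓ, 0 < η ≤ 1/2, 0 ≤ δ < (1-η)/(σℓ) where σ = ℓ/κ. Suppose (i) J + Jᵀ ⪰ 2κ Iₙ, (ii) Jᵀ J ⪯ ℓ² Iₙ, and (iii) 0 < T² < (1 - η - δσℓ)/(σℓ - κ + δ(1 - η - δσℓ)). Then Iₙ - χ (σℓ Iₙ - Jᵀ)(σℓ Iₙ - J) is positive definite, where χ = (T²/(1 - δT²)) · 1/(σℓ(1-η) - δσ²ℓ²). (This is Lemma 3: (RC₃) implies (σℓ)-global contractivity of S_δ.) -/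
open Matrix

private lemma psd_smul_aux {n : ℕ} {A : Matrix (Fin n) (Fin n) ℝ} (hA : A.PosSemidef)
    {c : ℝ} (hc : 0 ≤ c) : (c • A).PosSemidef := by
  refine ⟨?_, fun x => ?_⟩
  · unfold Matrix.IsHermitian
    rw [Matrix.conjTranspose_smul, hA.1]
    simp
  · exact (hA.smul hc).2 x

private lemma pd_smul_one_aux {n : ℕ} {c : ℝ} (hc : 0 < c) :
    (c • (1 : Matrix (Fin n) (Fin n) ℝ)).PosDef := by
  refine ⟨?_, fun x hx => ?_⟩
  · unfold Matrix.IsHermitian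
    simp
  · exact ((Matrix.PosDef.one (n := Fin n) (R := ℝ)).smul hc).2 hx

/-- Lemma 3 of the paper: for a `κ`-strongly monotone, `ℓ`-Lipschitz pseudogradient with
condition number `σ = ℓ/κ`, the reset condition (RC₃) implies that `S_δ` is
`(σℓ)`-globally contractive:
`Iₙ - χ (σℓIₙ - Jᵀ)(σℓIₙ - J) ≻ 0` with `χ = (T²/(1-δT²)) / (σℓ(1-η) - δσ²ℓ²)`. -/
theorem RC3_implies_contractivity {n : ℕ}
    (J : Matrix (Fin n) (Fin n) ℝ) (κ ℓ T η δ : ℝ)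
    (hκ : 0 < κ) (hκℓ : κ ≤ ℓ) (hη : 0 < η) (hη2 : η ≤ 1 / 2)
    (hδ0 : 0 ≤ δ) (hδ : δ < (1 - η) / ((ℓ / κ) * ℓ))
    (hmono : ((J + Jᵀ) - (2 * κ) • (1 : Matrix (Fin n) (Fin n) ℝ)).PosSemidef)
    (hlip : ((ℓ ^ 2 • (1 : Matrix (Fin n) (Fin n) ℝ)) - Jᵀ * J).PosSemidef)
    (hT : 0 < T)
    (hRC3 : T ^ 2 < (1 - η - δ * ((ℓ / κ) * ℓ)) /
      ((ℓ / κ) * ℓ - κ + δ * (1 - η - δ * ((ℓ / κ) * ℓ)))) :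
    ((1 : Matrix (Fin n) (Fin n) ℝ) -
      ((T ^ 2 / (1 - δ * T ^ 2)) * (1 / ((ℓ / κ) * ℓ * (1 - η) - δ * ((ℓ / κ) * ℓ) ^ 2))) •
        ((((ℓ / κ) * ℓ) • (1 : Matrix (Fin n) (Fin n) ℝ) - Jᵀ) *
          (((ℓ / κ) * ℓ) • (1 : Matrix (Fin n) (Fin n) ℝ) - J))).PosDef := by
  set ρ : ℝ := (ℓ / κ) * ℓ with hρdef
  have hℓ : 0 < ℓ := lt_of_lt_of_le hκ hκℓ
  have hρ : 0 < ρ := by positivity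
  have hκρ : κ ≤ ρ := by
    rw [hρdef]
    rw [div_mul_eq_mul_div, le_div_iff₀ hκ]
    nlinarith
  have hρκ : ρ * κ = ℓ ^ 2 := by
    rw [hρdef]; field_simp
  have hA : 0 < 1 - η - δ * ρ := by
    have := (lt_div_iff₀ hρ).mp hδ
    linarith
  set A : ℝ := 1 - η - δ * ρ with hAdef
  set den : ℝ := ρ - κ + δ * A with hdendef
  have hden0 : 0 ≤ den := by
    have : 0 ≤ δ * A := mul_nonneg hδ0 hA.le
    rw [hdendef]; linarith
  have hT2 : 0 < T ^ 2 := pow_pos hT 2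
  have hden : 0 < den := by
    rcases lt_or_eq_of_le hden0 with h | h
    · exact h
    · exfalso
      rw [← h, div_zero] at hRC3
      linarith
  have hTden : T ^ 2 * den < A := (lt_div_iff₀ hden).mp hRC3
  have hδT : δ * T ^ 2 < 1 := by
    rcases lt_or_eq_of_le hδ0 with hδpos | hδz
    · have h1 : δ * (T ^ 2 * den) < δ * A := by
        exact mul_lt_mul_of_pos_left hTden hδpos
      have h2 : δ * A ≤ den := by rw [hdendef]; linarith
      have h3 : δ * T ^ 2 * den < 1 * den := by nlinarith
      exact lt_of_mul_lt_mul_right h3 hden.le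
    · rw [← hδz]; norm_num
  have h1δT : 0 < 1 - δ * T ^ 2 := by linarith
  set χ : ℝ := T ^ 2 / (1 - δ * T ^ 2) * (1 / (ρ * (1 - η) - δ * ρ ^ 2)) with hχdef
  have hD : 0 < ρ * (1 - η) - δ * ρ ^ 2 := by nlinarith
  have hχ : 0 < χ := by
    rw [hχdef]
    exact mul_pos (div_pos hT2 h1δT) (by positivity)
  -- key scalar bound: χ * (ρ * (ρ - κ)) < 1
  have hχc : χ * (ρ * (ρ - κ)) = T ^ 2 * (ρ - κ) / ((1 - δ * T ^ 2) * A) := by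
    rw [hχdef, hAdef]
    field_simp
  have hkey : 0 < 1 - χ * (ρ * (ρ - κ)) := by
    have : χ * (ρ * (ρ - κ)) < 1 := by
      rw [hχc, div_lt_one (by positivity)]
      have : T ^ 2 * (ρ - κ + δ * A) < A := hTden
      nlinarith
    linarith
  -- matrix decomposition
  have hsum : (1 : Matrix (Fin n) (Fin n) ℝ) -
      χ • ((ρ • (1 : Matrix (Fin n) (Fin n) ℝ) - Jᵀ) * (ρ • 1 - J)) =
      (1 - χ * (ρ * (ρ - κ))) • (1 : Matrix (Fin n) (Fin n) ℝ) +
        ((χ * ρ) • ((J + Jᵀ) - (2 * κ) • 1) +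
          χ • ((ρ * κ) • (1 : Matrix (Fin n) (Fin n) ℝ) - Jᵀ * J)) := by
    simp only [Matrix.sub_mul, Matrix.mul_sub, Matrix.smul_mul, Matrix.mul_smul,
      Matrix.one_mul, Matrix.mul_one, smul_smul]
    module
  have hlip' : (((ρ * κ) • (1 : Matrix (Fin n) (Fin n) ℝ)) - Jᵀ * J).PosSemidef := by
    rw [hρκ]; exact hlip
  rw [hsum]
  exact (pd_smul_one_aux hkey).add_posSemidef
    ((psd_smul_aux hmono (by positivity)).add (psd_smul_aux hlip' hχ.le))
end

section
/- Let V₁(p,q) = (1/4)‖p - q‖², V₂(p) = (1/4)‖p - q*‖², V₃(q,τ) = τ² (P(q) - P(q*)) for scalar τ, where P : ℝⁿ → ℝ is convex, differentiable with ℓ-Lipschitz gradient and minimizer q*. Along the flow q' = (2/τ)(p - q), p' = -2τ∇P(q), τ' = η with 0 < η ≤ 1/2 and τ > 0, the function V = V₁ + V₂ + V₃ satisfies dV/dt ≤ -(1/τ)‖p - q‖² - (τ/(2ℓ))‖∇P(q)‖². -/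
open scoped RealInnerProductSpace

section LyapunovAux

variable {n : ℕ}

private lemma lyap_line_deriv (P : EuclideanSpace ℝ (Fin n) → ℝ)
    (g : EuclideanSpace ℝ (Fin n) → EuclideanSpace ℝ (Fin n))
    (hgrad : ∀ x, HasGradientAt P (g x) x) (x y : EuclideanSpace ℝ (Fin n)) (s : ℝ) :
    HasDerivAt (fun s : ℝ => P (x + s • (y - x))) ⟪g (x + s • (y - x)), y - x⟫ s := by
  have hc : HasDerivAt (fun s : ℝ => x + s • (y - x)) (y - x) s := by
    simpa using ((hasDerivAt_id s).smul_const (y - x)).const_add x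
  have := ((hgrad (x + s • (y - x))).hasFDerivAt).comp_hasDerivAt s hc
  simp at this
  exact this

private lemma lyap_first_order (P : EuclideanSpace ℝ (Fin n) → ℝ)
    (g : EuclideanSpace ℝ (Fin n) → EuclideanSpace ℝ (Fin n))
    (hconv : ConvexOn ℝ Set.univ P) (hgrad : ∀ x, HasGradientAt P (g x) x)
    (x z : EuclideanSpace ℝ (Fin n)) :
    P x + ⟪g x, z - x⟫ ≤ P z := by
  have hφconv : ConvexOn ℝ Set.univ (fun s : ℝ => P (x + s • (z - x))) := by
    have h := hconv.comp_affineMap (AffineMap.lineMap x z)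
    have he : (fun s : ℝ => P (x + s • (z - x))) = P ∘ (AffineMap.lineMap x z : ℝ →ᵃ[ℝ] _) := by
      funext s
      simp [AffineMap.lineMap_apply, add_comm]
    rw [he]
    simpa using h
  have hd := lyap_line_deriv P g hgrad x z 0
  simp only [zero_smul, add_zero] at hd
  have hs := hφconv.le_slope_of_hasDerivAt (Set.mem_univ (0:ℝ)) (Set.mem_univ (1:ℝ)) one_pos hd
  rw [slope_def_field] at hs
  simp only [one_smul, zero_smul, add_zero, add_sub_cancel, sub_zero, div_one] at hs
  linarith

private lemma lyap_descent (P : EuclideanSpace ℝ (Fin n) → ℝ)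
    (g : EuclideanSpace ℝ (Fin n) → EuclideanSpace ℝ (Fin n))
    (ℓ : ℝ)
    (hgrad : ∀ x, HasGradientAt P (g x) x)
    (hlip : ∀ x y, ‖g x - g y‖ ≤ ℓ * ‖x - y‖)
    (x y : EuclideanSpace ℝ (Fin n)) :
    P y ≤ P x + ⟪g x, y - x⟫ + ℓ / 2 * ‖y - x‖ ^ 2 := by
  set ψ : ℝ → ℝ := fun s =>
    ℓ * ‖y - x‖ ^ 2 / 2 * s ^ 2 + ⟪g x, y - x⟫ * s + P x - P (x + s • (y - x)) with hψ
  have hψd : ∀ s : ℝ, HasDerivAt ψ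
      (ℓ * ‖y - x‖ ^ 2 * s + ⟪g x, y - x⟫ - ⟪g (x + s • (y - x)), y - x⟫) s := by
    intro s
    have h1 := ((hasDerivAt_pow 2 s).const_mul (ℓ * ‖y - x‖ ^ 2 / 2))
    have h2 := (hasDerivAt_id s).const_mul (⟪g x, y - x⟫ : ℝ)
    have h3 : HasDerivAt (fun s : ℝ => P (x + s • (y - x))) ⟪g (x + s • (y - x)), y - x⟫ s :=
      lyap_line_deriv P g hgrad x y s
    have := ((h1.add h2).add_const (P x)).sub h3
    exact this.congr_deriv (by ring)
  have hmono : MonotoneOn ψ (Set.Icc (0:ℝ) 1) := by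
    apply monotoneOn_of_hasDerivWithinAt_nonneg (convex_Icc 0 1)
      (fun s _ => (hψd s).continuousAt.continuousWithinAt)
      (fun s _ => (hψd s).hasDerivWithinAt)
    intro s hs
    rw [interior_Icc] at hs
    have hip : ⟪g (x + s • (y - x)), y - x⟫ - ⟪g x, y - x⟫
        ≤ ℓ * ‖y - x‖ ^ 2 * s := by
      have h1 : ⟪g (x + s • (y - x)) - g x, y - x⟫ ≤ ‖g (x + s • (y - x)) - g x‖ * ‖y - x‖ :=
        real_inner_le_norm _ _
      have h2 : ‖g (x + s • (y - x)) - g x‖ ≤ ℓ * (s * ‖y - x‖) := by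
        have := hlip (x + s • (y - x)) x
        simpa [norm_smul, abs_of_pos hs.1] using this
      have h3 : ⟪g (x + s • (y - x)) - g x, y - x⟫
          = ⟪g (x + s • (y - x)), y - x⟫ - ⟪g x, y - x⟫ := inner_sub_left _ _ _
      nlinarith [norm_nonneg (y - x), norm_nonneg (g (x + s • (y - x)) - g x)]
    linarith
  have h01 := hmono (Set.mem_Icc.2 ⟨le_refl 0, zero_le_one⟩)
    (Set.mem_Icc.2 ⟨zero_le_one, le_refl 1⟩) zero_le_one
  simp only [hψ, zero_smul, add_zero, one_smul, one_pow, mul_one, mul_zero, sub_self,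
    zero_add, add_sub_cancel, ne_eq, OfNat.ofNat_ne_zero, not_false_eq_true, zero_pow] at h01
  linarith

private lemma lyap_grad_zero_at_min (P : EuclideanSpace ℝ (Fin n) → ℝ)
    (g : EuclideanSpace ℝ (Fin n) → EuclideanSpace ℝ (Fin n))
    (hgrad : ∀ x, HasGradientAt P (g x) x)
    (qs : EuclideanSpace ℝ (Fin n)) (hmin : ∀ z, P qs ≤ P z) : g qs = 0 := by
  have hloc : IsLocalMin P qs := Filter.Eventually.of_forall hmin
  have hz := hloc.hasFDerivAt_eq_zero (hgrad qs).hasFDerivAt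
  have := congrArg (InnerProductSpace.toDual ℝ (EuclideanSpace ℝ (Fin n))).symm hz
  simpa using this

private lemma lyap_key_ineq (P : EuclideanSpace ℝ (Fin n) → ℝ)
    (g : EuclideanSpace ℝ (Fin n) → EuclideanSpace ℝ (Fin n))
    (ℓ : ℝ) (hℓ : 0 < ℓ)
    (hconv : ConvexOn ℝ Set.univ P) (hgrad : ∀ x, HasGradientAt P (g x) x)
    (hlip : ∀ x y, ‖g x - g y‖ ≤ ℓ * ‖x - y‖)
    (qs : EuclideanSpace ℝ (Fin n)) (hmin : ∀ z, P qs ≤ P z)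
    (a : EuclideanSpace ℝ (Fin n)) :
    1 / (2 * ℓ) * ‖g a‖ ^ 2 ≤ ⟪g a, a - qs⟫ - (P a - P qs) := by
  have hg0 := lyap_grad_zero_at_min P g hgrad qs hmin
  set u := g a with hu
  set y := qs + (1 / ℓ) • u with hy
  have hB := lyap_descent P g ℓ hgrad hlip qs y
  have hA := lyap_first_order P g hconv hgrad a y
  have h1 : y - qs = (1 / ℓ) • u := by simp [hy]
  rw [h1, hg0, inner_zero_left] at hB
  have hn : ‖(1 / ℓ : ℝ) • u‖ ^ 2 = (1 / ℓ) ^ 2 * ‖u‖ ^ 2 := by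
    simp [norm_smul, mul_pow, sq_abs]
  rw [hn] at hB
  have h2 : y - a = (qs - a) + (1 / ℓ) • u := by rw [hy]; abel
  have h3 : ⟪u, y - a⟫ = ⟪u, qs - a⟫ + (1 / ℓ) * ‖u‖ ^ 2 := by
    rw [h2, inner_add_right, real_inner_smul_right, real_inner_self_eq_norm_sq]
  rw [h3] at hA
  have h4 : ⟪u, a - qs⟫ = -⟪u, qs - a⟫ := by
    rw [← inner_neg_right]; congr 1; abel
  rw [h4]
  have e1 : ℓ / 2 * ((1 / ℓ) ^ 2 * ‖u‖ ^ 2) = 1 / (2 * ℓ) * ‖u‖ ^ 2 := by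
    field_simp
  have e2 : (1 / ℓ) * ‖u‖ ^ 2 = 2 * (1 / (2 * ℓ) * ‖u‖ ^ 2) := by
    field_simp
  linarith

end LyapunovAux

/-- Core Lyapunov decrease inequality for the centralized momentum flow in a convex
potential game: along `q' = (2/τ)(p-q)`, `p' = -2τ∇P(q)`, `τ' = η` with `0 < η ≤ 1/2`
and `τ > 0`, the function `V = (1/4)‖p-q‖² + (1/4)‖p-q*‖² + τ²(P(q)-P(q*))` satisfies
`dV/dt ≤ -(1/τ)‖p-q‖² - (τ/(2ℓ))‖∇P(q)‖²`. -/
theorem lyapunov_decrease_momentum_flow {n : ℕ}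
    (P : EuclideanSpace ℝ (Fin n) → ℝ) (g : EuclideanSpace ℝ (Fin n) → EuclideanSpace ℝ (Fin n))
    (ℓ : ℝ) (hℓ : 0 < ℓ)
    (hconv : ConvexOn ℝ Set.univ P)
    (hgrad : ∀ x, HasGradientAt P (g x) x)
    (hlip : ∀ x y, ‖g x - g y‖ ≤ ℓ * ‖x - y‖)
    (qs : EuclideanSpace ℝ (Fin n)) (hmin : ∀ z, P qs ≤ P z)
    (η : ℝ) (hη : 0 < η) (hη2 : η ≤ 1 / 2)
    (q p : ℝ → EuclideanSpace ℝ (Fin n)) (τ : ℝ → ℝ) (t : ℝ)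
    (hτpos : 0 < τ t)
    (hq : HasDerivAt q ((2 / τ t) • (p t - q t)) t)
    (hp : HasDerivAt p ((-(2 * τ t)) • g (q t)) t)
    (hτ : HasDerivAt τ η t) :
    ∀ v : ℝ,
      HasDerivAt (fun s : ℝ =>
        (1 / 4) * ‖p s - q s‖ ^ 2 + (1 / 4) * ‖p s - qs‖ ^ 2 + (τ s) ^ 2 * (P (q s) - P qs))
        v t →
      v ≤ -(1 / τ t) * ‖p t - q t‖ ^ 2 - (τ t / (2 * ℓ)) * ‖g (q t)‖ ^ 2 := by
  intro v hv
  have hr : (0:ℝ) < τ t := hτpos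
  have hrne : τ t ≠ 0 := ne_of_gt hr
  -- derivative of each piece
  have hpq : HasDerivAt (fun s => p s - q s) _ t := hp.sub hq
  have h1 := HasDerivAt.inner ℝ hpq hpq
  have hpc := hp.sub_const qs
  have h2 := HasDerivAt.inner ℝ hpc hpc
  have h3 : HasDerivAt (fun s => P (q s)) ⟪g (q t), (2 / τ t) • (p t - q t)⟫ t := by
    have h := (hgrad (q t)).hasFDerivAt.comp_hasDerivAt t hq
    rw [InnerProductSpace.toDual_apply_apply] at h
    exact h
  have h4 : HasDerivAt (fun s => (τ s) ^ 2) (2 * τ t ^ 1 * η) t := hτ.pow 2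
  have hV0 := ((h1.const_mul ((1:ℝ)/4)).add (h2.const_mul ((1:ℝ)/4))).add
    (h4.mul (h3.sub_const (P qs)))
  -- rewrite the goal function using inner products
  have efun : (fun s : ℝ =>
        (1 / 4) * ‖p s - q s‖ ^ 2 + (1 / 4) * ‖p s - qs‖ ^ 2 + (τ s) ^ 2 * (P (q s) - P qs))
      = (fun s : ℝ =>
        (1 / 4) * ⟪p s - q s, p s - q s⟫ + (1 / 4) * ⟪p s - qs, p s - qs⟫
          + (τ s) ^ 2 * (P (q s) - P qs)) := by
    funext s
    rw [real_inner_self_eq_norm_sq, real_inner_self_eq_norm_sq]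
  rw [efun] at hv
  have hvu := hv.unique hV0
  -- abbreviations
  set w := p t - q t with hw
  set u := g (q t) with hu
  set c := q t - qs with hc
  set D := P (q t) - P qs with hD
  have hm : p t - qs = w + c := by rw [hw, hc]; abel
  -- expand all inner products
  have e1 : ⟪w, (-(2 * τ t)) • u - (2 / τ t) • w⟫
      = -(2 * τ t) * ⟪u, w⟫ - (2 / τ t) * ‖w‖ ^ 2 := by
    rw [inner_sub_right, real_inner_smul_right, real_inner_smul_right,
      real_inner_self_eq_norm_sq, real_inner_comm w u]
  have e1' : ⟪(-(2 * τ t)) • u - (2 / τ t) • w, w⟫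
      = -(2 * τ t) * ⟪u, w⟫ - (2 / τ t) * ‖w‖ ^ 2 := by
    rw [inner_sub_left, real_inner_smul_left, real_inner_smul_left,
      real_inner_self_eq_norm_sq]
  have e2 : ⟪p t - qs, (-(2 * τ t)) • u⟫ = -(2 * τ t) * (⟪u, w⟫ + ⟪u, c⟫) := by
    rw [real_inner_smul_right, hm, inner_add_left, real_inner_comm w u, real_inner_comm c u]
  have e2' : ⟪(-(2 * τ t)) • u, p t - qs⟫ = -(2 * τ t) * (⟪u, w⟫ + ⟪u, c⟫) := by
    rw [real_inner_smul_left, hm, inner_add_right]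
  have e3 : ⟪u, (2 / τ t) • w⟫ = (2 / τ t) * ⟪u, w⟫ := real_inner_smul_right _ _ _
  rw [e1, e1', e2, e2', e3] at hvu
  -- key convexity/smoothness inequality
  have key := lyap_key_ineq P g ℓ hℓ hconv hgrad hlip qs hmin (q t)
  rw [← hu, ← hc, ← hD] at key
  have hDpos : (0:ℝ) ≤ D := by rw [hD]; linarith [hmin (q t)]
  -- final computation
  have hvval : v = -(1 / τ t) * ‖w‖ ^ 2 - τ t * ⟪u, c⟫ + 2 * τ t * η * D := by
    rw [hvu]
    field_simp
    ring
  rw [hvval]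
  have f1 : τ t * (1 / (2 * ℓ) * ‖u‖ ^ 2) ≤ τ t * (⟪u, c⟫ - D) :=
    mul_le_mul_of_nonneg_left key hr.le
  have f2 : (0:ℝ) ≤ τ t * (1 - 2 * η) * D := by
    apply mul_nonneg (mul_nonneg hr.le (by linarith)) hDpos
  have e4 : τ t * (1 / (2 * ℓ) * ‖u‖ ^ 2) = τ t / (2 * ℓ) * ‖u‖ ^ 2 := by ring
  rw [e4] at f1
  clear_value w u c D
  linarith [f1, f2]
end
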